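/- Suppose 0 < r₁ ≤ r₂, V = ℝ^d×{0}, and let p ∈ R̄_{1,V}(0,r) and p' ∈ B̄(p, r₁) (Heisenberg ball). Then |x'^d| ≤ 2r₁, |(x'⊥, y')| ≤ 2r₂, and |z'| ≤ 20r₂². -/

import Mathlib

open scoped RealInnerProductSpace

/-- The underlying set of the Heisenberg group `ℍⁿ = ℝⁿ × ℝⁿ × ℝ`. -/
abbrev Heis (n : ℕ) := EuclideanSpace ℝ (Fin n) × EuclideanSpace ℝ (Fin n) × ℝ

/-- The Heisenberg group operation. -/
noncomputable def hMul {n : ℕ} (p p' : Heis n) : Heis n :=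
  (p.1 + p'.1, p.2.1 + p'.2.1,
    p.2.2 + p'.2.2 + 2 * (⟪p.1, p'.2.1⟫ - ⟪p.2.1, p'.1⟫))

/-- The Heisenberg group inverse. -/
def hInv {n : ℕ} (p : Heis n) : Heis n := (-p.1, -p.2.1, -p.2.2)

/-- `|(a,b)|`, the Euclidean norm of a pair of vectors viewed in `ℝ^{2n}`. -/
noncomputable def pnorm {n : ℕ} (a b : EuclideanSpace ℝ (Fin n)) : ℝ :=
  Real.sqrt (‖a‖ ^ 2 + ‖b‖ ^ 2)

/-- The homogeneous (Korányi) norm. -/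
noncomputable def hNorm {n : ℕ} (p : Heis n) : ℝ :=
  (pnorm p.1 p.2.1 ^ 4 + p.2.2 ^ 2) ^ ((1 : ℝ) / 4)

/-- The left-invariant Heisenberg metric `d_ℍ(p,p') = ‖p⁻¹ * p'‖_ℍ`. -/
noncomputable def dH {n : ℕ} (p p' : Heis n) : ℝ := hNorm (hMul (hInv p) p')

/-- `x ↦ x^d = (x₁,…,x_d,0,…,0)`. -/
noncomputable def trunc {n : ℕ} (d : ℕ) (x : EuclideanSpace ℝ (Fin n)) :
    EuclideanSpace ℝ (Fin n) :=
  WithLp.toLp 2 (fun i => if (i : ℕ) < d then x i else 0)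

/-- `x ↦ x⊥ = (0,…,0,x_{d+1},…,x_n)`. -/
noncomputable def truncPerp {n : ℕ} (d : ℕ) (x : EuclideanSpace ℝ (Fin n)) :
    EuclideanSpace ℝ (Fin n) :=
  WithLp.toLp 2 (fun i => if (i : ℕ) < d then 0 else x i)

/-- The type-1 rectangle `R̄_{1,V}(0,r)` for `V = ℝ^d × {0}`. -/
noncomputable def rect1 (n d : ℕ) (r₁ r₂ : ℝ) : Set (Heis n) :=
  {p | ‖trunc d p.1‖ ≤ r₁ ∧
    pnorm (truncPerp d p.1) p.2.1 ^ 4 +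
      |p.2.2 + 2 * ⟪trunc d p.1, trunc d p.2.1⟫| ^ 2 ≤ r₂ ^ 4}

/-- The type-2 rectangle `R̄_{2,V}(0,r)` for `V = ℝ^d × {0}`. -/
noncomputable def rect2 (n d : ℕ) (r₁ r₂ : ℝ) : Set (Heis n) :=
  {p | ‖trunc d p.1‖ ≤ r₁ ∧
    pnorm (truncPerp d p.1) p.2.1 ^ 4 +
      |p.2.2 - 2 * ⟪trunc d p.1, trunc d p.2.1⟫| ^ 2 ≤ r₂ ^ 4}

lemma pnorm_eq {n : ℕ} (a b : EuclideanSpace ℝ (Fin n)) :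
    pnorm a b = ‖(WithLp.equiv 2 (EuclideanSpace ℝ (Fin n) × EuclideanSpace ℝ (Fin n))).symm (a, b)‖ := by
  have h : ‖(WithLp.equiv 2 (EuclideanSpace ℝ (Fin n) × EuclideanSpace ℝ (Fin n))).symm (a, b)‖ ^ 2
      = ‖a‖ ^ 2 + ‖b‖ ^ 2 := WithLp.prod_norm_sq_eq_of_L2 _
  rw [pnorm, ← h, Real.sqrt_sq (norm_nonneg _)]

lemma pnorm_nonneg {n : ℕ} (a b : EuclideanSpace ℝ (Fin n)) : 0 ≤ pnorm a b :=
  Real.sqrt_nonneg _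

lemma norm_fst_le_pnorm {n : ℕ} (a b : EuclideanSpace ℝ (Fin n)) : ‖a‖ ≤ pnorm a b := by
  calc ‖a‖ = Real.sqrt (‖a‖ ^ 2) := (Real.sqrt_sq (norm_nonneg a)).symm
    _ ≤ _ := Real.sqrt_le_sqrt (by nlinarith [sq_nonneg ‖b‖])

lemma norm_snd_le_pnorm {n : ℕ} (a b : EuclideanSpace ℝ (Fin n)) : ‖b‖ ≤ pnorm a b := by
  calc ‖b‖ = Real.sqrt (‖b‖ ^ 2) := (Real.sqrt_sq (norm_nonneg b)).symm
    _ ≤ _ := Real.sqrt_le_sqrt (by nlinarith [sq_nonneg ‖a‖])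

lemma pnorm_triangle {n : ℕ} (a b c e : EuclideanSpace ℝ (Fin n)) :
    pnorm (a + c) (b + e) ≤ pnorm a b + pnorm c e := by
  simp only [pnorm_eq]
  calc ‖(WithLp.equiv 2 _).symm (a + c, b + e)‖
      = ‖(WithLp.equiv 2 (EuclideanSpace ℝ (Fin n) × EuclideanSpace ℝ (Fin n))).symm (a, b)
          + (WithLp.equiv 2 _).symm (c, e)‖ := by rfl
    _ ≤ _ := norm_add_le _ _

lemma trunc_add {n d : ℕ} (x y : EuclideanSpace ℝ (Fin n)) :
    trunc d (x + y) = trunc d x + trunc d y := by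
  ext i
  simp only [trunc, PiLp.add_apply, PiLp.toLp_apply]
  split <;> simp

lemma truncPerp_add {n d : ℕ} (x y : EuclideanSpace ℝ (Fin n)) :
    truncPerp d (x + y) = truncPerp d x + truncPerp d y := by
  ext i
  simp only [truncPerp, PiLp.add_apply, PiLp.toLp_apply]
  split <;> simp

lemma norm_trunc_le {n d : ℕ} (x : EuclideanSpace ℝ (Fin n)) : ‖trunc d x‖ ≤ ‖x‖ := by
  rw [EuclideanSpace.norm_eq, EuclideanSpace.norm_eq]
  apply Real.sqrt_le_sqrt
  apply Finset.sum_le_sum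
  intro i _
  simp only [trunc, PiLp.toLp_apply]
  split <;> simp [sq_nonneg]

lemma norm_truncPerp_le {n d : ℕ} (x : EuclideanSpace ℝ (Fin n)) : ‖truncPerp d x‖ ≤ ‖x‖ := by
  rw [EuclideanSpace.norm_eq, EuclideanSpace.norm_eq]
  apply Real.sqrt_le_sqrt
  apply Finset.sum_le_sum
  intro i _
  simp only [truncPerp, PiLp.toLp_apply]
  split <;> simp [sq_nonneg]

lemma trunc_add_truncPerp {n d : ℕ} (x : EuclideanSpace ℝ (Fin n)) :
    trunc d x + truncPerp d x = x := by
  ext i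
  simp only [trunc, truncPerp, PiLp.add_apply, PiLp.toLp_apply]
  split <;> simp

lemma pnorm_le_pnorm_left {n : ℕ} {a a' b : EuclideanSpace ℝ (Fin n)} (h : ‖a‖ ≤ ‖a'‖) :
    pnorm a b ≤ pnorm a' b := by
  apply Real.sqrt_le_sqrt
  have : ‖a‖ ^ 2 ≤ ‖a'‖ ^ 2 := by nlinarith [norm_nonneg a]
  linarith

lemma pow4_root_le {A B r : ℝ} (hA : 0 ≤ A) (hr : 0 ≤ r)
    (h : (A ^ 4 + B ^ 2) ^ ((1:ℝ)/4) ≤ r) : A ≤ r ∧ |B| ≤ r ^ 2 := by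
  have hS : (0:ℝ) ≤ A ^ 4 + B ^ 2 := by positivity
  have h4 : A ^ 4 + B ^ 2 ≤ r ^ 4 := by
    have h2 := pow_le_pow_left₀ (Real.rpow_nonneg hS _) h 4
    rwa [← Real.rpow_natCast ((A ^ 4 + B ^ 2) ^ ((1:ℝ)/4)) 4, ← Real.rpow_mul hS,
      show (1:ℝ)/4 * ((4:ℕ):ℝ) = 1 by norm_num, Real.rpow_one] at h2
  refine ⟨?_, ?_⟩
  · exact le_of_pow_le_pow_left₀ (n := 4) (by norm_num) hr (by nlinarith [sq_nonneg B])
  · exact le_of_pow_le_pow_left₀ (n := 2) (by norm_num) (by positivity)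
      (by rw [sq_abs]; nlinarith [pow_nonneg hA 4])

set_option maxHeartbeats 2000000 in
theorem rect1_ball_coordinate_bounds_small_r1 {n d : ℕ} (hd : d ≤ n) {r₁ r₂ : ℝ}
    (hr₁ : 0 < r₁) (hr : r₁ ≤ r₂) (p p' : Heis n)
    (hp : p ∈ rect1 n d r₁ r₂) (hp' : dH p p' ≤ r₁) :
    ‖trunc d p'.1‖ ≤ 2 * r₁ ∧
    pnorm (truncPerp d p'.1) p'.2.1 ≤ 2 * r₂ ∧
    |p'.2.2| ≤ 20 * r₂ ^ 2 := by
  obtain ⟨h1, h2⟩ := hp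
  have hr₂ : 0 < r₂ := lt_of_lt_of_le hr₁ hr
  have hp'' : (pnorm (-p.1 + p'.1) (-p.2.1 + p'.2.1) ^ 4 +
      (-p.2.2 + p'.2.2 + 2 * (⟪-p.1, p'.2.1⟫ - ⟪-p.2.1, p'.1⟫)) ^ 2) ^ ((1:ℝ)/4) ≤ r₁ := hp'
  obtain ⟨hA, hB⟩ := pow4_root_le (pnorm_nonneg _ _) hr₁.le hp''
  have hdx : ‖-p.1 + p'.1‖ ≤ r₁ := (norm_fst_le_pnorm _ _).trans hA
  have hdy : ‖-p.2.1 + p'.2.1‖ ≤ r₁ := (norm_snd_le_pnorm _ _).trans hA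
  -- bounds from membership in the rectangle
  have hP : pnorm (truncPerp d p.1) p.2.1 ≤ r₂ :=
    le_of_pow_le_pow_left₀ (n := 4) (by norm_num) hr₂.le
      (by linarith [sq_nonneg |p.2.2 + 2 * ⟪trunc d p.1, trunc d p.2.1⟫|])
  have hz0 : |p.2.2 + 2 * ⟪trunc d p.1, trunc d p.2.1⟫| ≤ r₂ ^ 2 :=
    le_of_pow_le_pow_left₀ (n := 2) (by norm_num) (by positivity)
      (by
        have e : (r₂ ^ 2) ^ 2 = r₂ ^ 4 := by ring
        linarith [pow_nonneg (pnorm_nonneg (truncPerp d p.1) p.2.1) 4])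
  -- goal 1
  have g1 : ‖trunc d p'.1‖ ≤ 2 * r₁ := by
    calc ‖trunc d p'.1‖ = ‖trunc d (p.1 + (-p.1 + p'.1))‖ := by rw [add_neg_cancel_left]
      _ = ‖trunc d p.1 + trunc d (-p.1 + p'.1)‖ := by rw [trunc_add]
      _ ≤ ‖trunc d p.1‖ + ‖trunc d (-p.1 + p'.1)‖ := norm_add_le _ _
      _ ≤ r₁ + r₁ := add_le_add h1 ((norm_trunc_le _).trans hdx)
      _ = 2 * r₁ := by ring
  -- goal 2
  have g2 : pnorm (truncPerp d p'.1) p'.2.1 ≤ 2 * r₂ := by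
    calc pnorm (truncPerp d p'.1) p'.2.1
        = pnorm (truncPerp d (p.1 + (-p.1 + p'.1))) (p.2.1 + (-p.2.1 + p'.2.1)) := by
          rw [add_neg_cancel_left, add_neg_cancel_left]
      _ = pnorm (truncPerp d p.1 + truncPerp d (-p.1 + p'.1)) (p.2.1 + (-p.2.1 + p'.2.1)) := by
          rw [truncPerp_add]
      _ ≤ pnorm (truncPerp d p.1) p.2.1 +
          pnorm (truncPerp d (-p.1 + p'.1)) (-p.2.1 + p'.2.1) := pnorm_triangle _ _ _ _
      _ ≤ r₂ + r₁ := add_le_add hP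
          ((pnorm_le_pnorm_left (norm_truncPerp_le _)).trans hA)
      _ ≤ 2 * r₂ := by linarith
  refine ⟨g1, g2, ?_⟩
  -- goal 3
  have hxperp : ‖truncPerp d p.1‖ ≤ r₂ := (norm_fst_le_pnorm _ _).trans hP
  have hy : ‖p.2.1‖ ≤ r₂ := (norm_snd_le_pnorm _ _).trans hP
  have hx : ‖p.1‖ ≤ 2 * r₂ := by
    calc ‖p.1‖ = ‖trunc d p.1 + truncPerp d p.1‖ := by rw [trunc_add_truncPerp]
      _ ≤ ‖trunc d p.1‖ + ‖truncPerp d p.1‖ := norm_add_le _ _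
      _ ≤ 2 * r₂ := by linarith
  have hx' : ‖p'.1‖ ≤ 3 * r₂ := by
    calc ‖p'.1‖ = ‖p.1 + (-p.1 + p'.1)‖ := by rw [add_neg_cancel_left]
      _ ≤ ‖p.1‖ + ‖-p.1 + p'.1‖ := norm_add_le _ _
      _ ≤ 3 * r₂ := by linarith
  have hy' : ‖p'.2.1‖ ≤ 2 * r₂ := by
    calc ‖p'.2.1‖ = ‖p.2.1 + (-p.2.1 + p'.2.1)‖ := by rw [add_neg_cancel_left]
      _ ≤ ‖p.2.1‖ + ‖-p.2.1 + p'.2.1‖ := norm_add_le _ _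
      _ ≤ 2 * r₂ := by linarith
  have i1 : |⟪p.1, p'.2.1⟫| ≤ 4 * r₂ ^ 2 :=
    (abs_real_inner_le_norm _ _).trans
      (by nlinarith [norm_nonneg p.1, norm_nonneg p'.2.1])
  have i2 : |⟪p.2.1, p'.1⟫| ≤ 3 * r₂ ^ 2 :=
    (abs_real_inner_le_norm _ _).trans
      (by nlinarith [norm_nonneg p.2.1, norm_nonneg p'.1])
  have i3 : |⟪trunc d p.1, trunc d p.2.1⟫| ≤ r₂ ^ 2 :=
    (abs_real_inner_le_norm _ _).trans
      (by nlinarith [norm_nonneg (trunc d p.1), norm_trunc_le (d := d) p.2.1,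
        norm_nonneg (trunc d p.2.1), norm_nonneg p.2.1])
  have hz : |p.2.2| ≤ 3 * r₂ ^ 2 := by
    rcases abs_le.mp hz0 with ⟨l0, u0⟩
    rcases abs_le.mp i3 with ⟨l3, u3⟩
    rw [abs_le]; constructor <;> linarith
  have hBr : |-p.2.2 + p'.2.2 + 2 * (-⟪p.1, p'.2.1⟫ - -⟪p.2.1, p'.1⟫)| ≤ r₁ ^ 2 := by
    rw [← inner_neg_left p.1 p'.2.1, ← inner_neg_left p.2.1 p'.1]; exact hB
  have hr12 : r₁ ^ 2 ≤ r₂ ^ 2 := by nlinarith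
  rcases abs_le.mp hBr with ⟨lB, uB⟩
  rcases abs_le.mp i1 with ⟨l1, u1⟩
  rcases abs_le.mp i2 with ⟨l2, u2⟩
  rcases abs_le.mp hz with ⟨lz, uz⟩
  rw [abs_le]; constructor <;> linarith
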